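/- Energy as a function of deadline: for fixed L, x, N0, h > 0, the minimal energy E(t) = (N0·x·t/h)·(2^(L/(xt)) − 1) needed to transmit L bits in time t over bandwidth x is strictly decreasing and strictly convex in t on (0, ∞), with limit N0·L·ln 2/h as t → ∞ and limit +∞ as t → 0⁺. -/

import Mathlib

/-- The minimal energy `E(t) = (N0·x·t/h)·(2^(L/(xt)) − 1)` is strictly decreasing and
strictly convex on (0,∞), with limit `N0·L·ln 2/h` as t → ∞ and +∞ as t → 0⁺. -/
theorem stmt18 (L x N0 h : ℝ) (hL : 0 < L) (hx : 0 < x) (hN0 : 0 < N0) (hh : 0 < h) :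
    StrictAntiOn (fun t : ℝ => N0 * x * t / h * ((2 : ℝ) ^ (L / (x * t)) - 1))
      (Set.Ioi 0) ∧
    StrictConvexOn ℝ (Set.Ioi 0)
      (fun t : ℝ => N0 * x * t / h * ((2 : ℝ) ^ (L / (x * t)) - 1)) ∧
    Filter.Tendsto (fun t : ℝ => N0 * x * t / h * ((2 : ℝ) ^ (L / (x * t)) - 1))
      Filter.atTop (nhds (N0 * L * Real.log 2 / h)) ∧
    Filter.Tendsto (fun t : ℝ => N0 * x * t / h * ((2 : ℝ) ^ (L / (x * t)) - 1))
      (nhdsWithin 0 (Set.Ioi 0)) Filter.atTop := by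
  set c : ℝ := N0 * x / h with hc_def
  set k : ℝ := Real.log 2 * L / x with hk_def
  have hc : 0 < c := by positivity
  have hk : 0 < k := by
    have h2 : (0:ℝ) < Real.log 2 := Real.log_pos (by norm_num)
    positivity
  -- rewrite the function
  have hfg : (fun t : ℝ => N0 * x * t / h * ((2 : ℝ) ^ (L / (x * t)) - 1))
      = (fun t : ℝ => c * (t * Real.exp (k / t) - t)) := by
    funext t
    rcases eq_or_ne t 0 with rfl | ht
    · simp
    · rw [Real.rpow_def_of_pos (by norm_num : (0:ℝ) < 2)]
      have : Real.log 2 * (L / (x * t)) = k / t := by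
        rw [hk_def]; field_simp
      rw [this, hc_def]
      ring
  rw [hfg]
  set g : ℝ → ℝ := fun t => c * (t * Real.exp (k / t) - t) with hg_def
  set D : ℝ → ℝ := fun t => c * (Real.exp (k / t) * (1 - k / t) - 1) with hD_def
  -- first derivative
  have hderiv : ∀ t : ℝ, t ≠ 0 → HasDerivAt g (D t) t := by
    intro t ht
    have h1 : HasDerivAt (fun s : ℝ => k / s) (-(k / t ^ 2)) t := by
      simpa [div_eq_mul_inv, mul_comm] using (hasDerivAt_inv ht).const_mul k
    have h2 : HasDerivAt (fun s : ℝ => Real.exp (k / s))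
        (Real.exp (k / t) * -(k / t ^ 2)) t := h1.exp
    have h3 : HasDerivAt (fun s : ℝ => s * Real.exp (k / s))
        (1 * Real.exp (k / t) + t * (Real.exp (k / t) * -(k / t ^ 2))) t :=
      (hasDerivAt_id t).mul h2
    have h4 := ((h3.sub (hasDerivAt_id t)).const_mul c)
    refine h4.congr_deriv ?_
    rw [hD_def]
    field_simp
    ring
  -- second derivative
  have hderiv2 : ∀ t : ℝ, t ≠ 0 →
      HasDerivAt D (c * (Real.exp (k / t) * k ^ 2 / t ^ 3)) t := by
    intro t ht
    have h1 : HasDerivAt (fun s : ℝ => k / s) (-(k / t ^ 2)) t := by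
      simpa [div_eq_mul_inv, mul_comm] using (hasDerivAt_inv ht).const_mul k
    have h2 : HasDerivAt (fun s : ℝ => Real.exp (k / s))
        (Real.exp (k / t) * -(k / t ^ 2)) t := h1.exp
    have h6 := h2.mul ((hasDerivAt_const t (1:ℝ)).sub h1)
    have h7 := ((h6.sub (hasDerivAt_const t (1:ℝ))).const_mul c)
    refine h7.congr_deriv ?_
    simp only [Pi.sub_apply]
    field_simp
    ring
  have hcont : ContinuousOn g (Set.Ioi 0) := fun t ht =>
    (hderiv t (ne_of_gt ht)).continuousAt.continuousWithinAt
  have hDneg : ∀ t : ℝ, 0 < t → D t < 0 := by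
    intro t ht
    rw [hD_def]
    have hu : 0 < k / t := div_pos hk ht
    have h1 : -(k / t) + 1 < Real.exp (-(k / t)) := Real.add_one_lt_exp (by linarith)
    have h2 : Real.exp (-(k / t)) * Real.exp (k / t) = 1 := by
      rw [← Real.exp_add]; simp
    have h3 : Real.exp (k / t) * (1 - k / t) - 1 < 0 := by
      nlinarith [Real.exp_pos (k / t), Real.exp_pos (-(k / t))]
    nlinarith
  refine ⟨?_, ?_, ?_, ?_⟩
  · -- strictly decreasing
    refine strictAntiOn_of_deriv_neg (convex_Ioi 0) hcont ?_
    intro t ht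
    rw [interior_Ioi] at ht
    rw [(hderiv t (ne_of_gt ht)).deriv]
    exact hDneg t ht
  · -- strictly convex
    refine strictConvexOn_of_deriv2_pos (convex_Ioi 0) hcont ?_
    intro t ht
    rw [interior_Ioi] at ht
    have heq : deriv g =ᶠ[nhds t] D :=
      (eventually_ne_nhds (ne_of_gt ht)).mono fun s hs => (hderiv s hs).deriv
    have : deriv^[2] g t = deriv D t := by
      simp only [Function.iterate_succ, Function.iterate_zero, Function.comp]
      exact heq.deriv_eq
    rw [this, (hderiv2 t (ne_of_gt ht)).deriv]
    have ht' : (0:ℝ) < t := ht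
    positivity
  · -- limit at infinity
    have hck : c * k = N0 * L * Real.log 2 / h := by
      rw [hc_def, hk_def]; field_simp
    have hkt : Filter.Tendsto (fun t : ℝ => k / t) Filter.atTop
        (nhdsWithin 0 {(0:ℝ)}ᶜ) := by
      refine tendsto_nhdsWithin_of_tendsto_nhds_of_eventually_within _
        (tendsto_const_nhds.div_atTop Filter.tendsto_id) ?_
      filter_upwards [Filter.eventually_gt_atTop (0:ℝ)] with t ht
      exact (ne_of_gt (div_pos hk ht))
    have hslope : Filter.Tendsto (fun s : ℝ => (Real.exp s - 1) / s)
        (nhdsWithin 0 {(0:ℝ)}ᶜ) (nhds 1) := by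
      have h0 := (Real.hasDerivAt_exp 0)
      rw [hasDerivAt_iff_tendsto_slope] at h0
      have : slope Real.exp 0 = fun s : ℝ => (Real.exp s - 1) / s := by
        funext s; rw [slope_def_field]; simp
      rw [this] at h0
      simpa using h0
    have hmain := (hslope.comp hkt).const_mul (c * k)
    rw [mul_one] at hmain
    rw [← hck]
    refine hmain.congr' ?_
    filter_upwards [Filter.eventually_gt_atTop (0:ℝ)] with t ht
    have hkt0 : k / t ≠ 0 := ne_of_gt (div_pos hk ht)
    show c * k * ((Real.exp (k / t) - 1) / (k / t)) = c * (t * Real.exp (k / t) - t)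
    field_simp
  · -- limit at 0+
    have h1 : Filter.Tendsto (fun t : ℝ => k / t) (nhdsWithin 0 (Set.Ioi 0))
        Filter.atTop := by
      simpa [div_eq_mul_inv] using tendsto_inv_nhdsGT_zero.const_mul_atTop hk
    have h2 : Filter.Tendsto (fun u : ℝ => Real.exp u / u) Filter.atTop
        Filter.atTop := by
      simpa using Real.tendsto_exp_div_pow_atTop 1
    have h3 : Filter.Tendsto
        (fun t : ℝ => c * k * (Real.exp (k / t) / (k / t)) + -(c * t))
        (nhdsWithin 0 (Set.Ioi 0)) Filter.atTop := by
      have h0 : Filter.Tendsto (fun t : ℝ => -(c * t)) (nhdsWithin 0 (Set.Ioi 0))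
          (nhds 0) := by
        have : Filter.Tendsto (fun t : ℝ => -(c * t)) (nhds 0) (nhds (-(c * 0))) :=
          (((continuous_const.mul continuous_id).neg : Continuous fun t : ℝ => -(c * t))).tendsto 0
        simpa using this.mono_left nhdsWithin_le_nhds
      exact Filter.Tendsto.atTop_add ((h2.comp h1).const_mul_atTop (by positivity)) h0
    refine h3.congr' ?_
    filter_upwards [self_mem_nhdsWithin] with t ht
    have ht0 : (0:ℝ) < t := ht
    have hkt0 : k / t ≠ 0 := ne_of_gt (div_pos hk ht0)
    show c * k * (Real.exp (k / t) / (k / t)) + -(c * t) = c * (t * Real.exp (k / t) - t)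
    field_simp
    ring
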